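/- Under the recursive additive-confounder model X₁ = g₁(H) + ε₁, X_j = f_j(X₁,...,X_{j−1}) + g_j(H) + ε_j (j = 2,...,p), with ε₁,...,ε_p i.i.d.-independent mean-zero noises independent of H, define S_j = E[X_j | H]. Then for each j there exists a measurable function r_j such that g_j(H) = r_j(S₁,...,S_j) almost surely; in particular, g₁(H) = S₁. -/

import Mathlib

open MeasureTheory ProbabilityTheory

lemma freezing_aux {Ω β E : Type*} {mΩ : MeasurableSpace Ω} [MeasurableSpace β]
    [MeasurableSpace E] [StandardBorelSpace E] [Nonempty E]
    (μ : Measure Ω) [IsProbabilityMeasure μ]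
    {X : Ω → β} {Y : Ω → E} (hX : Measurable X) (hY : Measurable Y)
    (hindep : IndepFun X Y μ)
    {Φ : β × E → ℝ} (hΦ : Measurable Φ)
    (hint : Integrable (fun ω => Φ (X ω, Y ω)) μ) :
    μ[fun ω => Φ (X ω, Y ω) | MeasurableSpace.comap X inferInstance]
      =ᵐ[μ] fun ω => ∫ y, Φ (X ω, y) ∂(μ.map Y) := by
  have hmap : μ.map (fun ω => (X ω, Y ω)) = (μ.map X).prod (μ.map Y) :=
    (indepFun_iff_map_prod_eq_prod_map_map hX.aemeasurable hY.aemeasurable).mp hindep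
  have hPY : IsProbabilityMeasure (μ.map Y) := Measure.isProbabilityMeasure_map hY.aemeasurable
  have hPX : IsProbabilityMeasure (μ.map X) := Measure.isProbabilityMeasure_map hX.aemeasurable
  have hPpair : IsProbabilityMeasure (μ.map (fun ω => (X ω, Y ω))) :=
    Measure.isProbabilityMeasure_map (hX.prodMk hY).aemeasurable
  have hconst : ∀ᵐ ω ∂μ, condDistrib Y X μ (X ω) = μ.map Y := by
    have h1 : (μ.map (fun ω => (X ω, Y ω))) =
        (μ.map (fun ω => (X ω, Y ω))).fst ⊗ₘ (Kernel.const β (μ.map Y)) := by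
      rw [Measure.compProd_const, Measure.fst_map_prodMk hY, hmap]
    have h2 := eq_condKernel_of_measure_eq_compProd (ρ := μ.map (fun ω => (X ω, Y ω))) _ h1
    rw [Measure.fst_map_prodMk hY] at h2
    have h3 : ∀ᵐ ω ∂μ, (Kernel.const β (μ.map Y)) (X ω)
        = (μ.map (fun ω => (X ω, Y ω))).condKernel (X ω) :=
      ae_of_ae_map hX.aemeasurable h2
    filter_upwards [h3] with ω hω
    rw [condDistrib, ← hω, Kernel.const_apply]
  have h4 := condExp_prod_ae_eq_integral_condDistrib hX hY.aemeasurable hΦ.stronglyMeasurable hint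
  filter_upwards [h4, hconst] with ω h1 h2
  rw [h1, h2]

/-- In the recursive additive-confounder model with mean-zero noises independent of `H`,
the proxies `S_j = E[X_j | H]` recover the confounding functions: for each `j` there is a
measurable `r_j` with `g_j(H) = r_j(S₀,…,S_j)` a.s.; in particular `g₀(H) = S₀` a.s.
(Indices are `0`-based.) -/
theorem proxies_recover_confounding_functions
    {Ω 𝓗 : Type*} {mΩ : MeasurableSpace Ω} [MeasurableSpace 𝓗]
    (μ : Measure Ω) [IsProbabilityMeasure μ]
    (p : ℕ) (hp : 0 < p) (H : Ω → 𝓗) (hH : Measurable H)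
    (ε : ℕ → Ω → ℝ) (hεm : ∀ j, Measurable (ε j))
    (hεint : ∀ j, Integrable (ε j) μ) (hεmean : ∀ j, ∫ ω, ε j ω ∂μ = 0)
    (hεindep : iIndepFun ε μ)
    (hεH : IndepFun (fun ω (i : Fin p) => ε i ω) H μ)
    (g : ℕ → 𝓗 → ℝ) (hg : ∀ j, Measurable (g j))
    (f : (j : ℕ) → (Fin j → ℝ) → ℝ) (hf : ∀ j, Measurable (f j))
    (hf0 : ∀ v, f 0 v = 0)
    (X : ℕ → Ω → ℝ) (hXint : ∀ j, j < p → Integrable (X j) μ)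
    (hX : ∀ j, j < p → ∀ ω,
      X j ω = f j (fun k => X k ω) + g j (H ω) + ε j ω) :
    (∀ j, j < p → ∃ r : (Fin (j + 1) → ℝ) → ℝ, Measurable r ∧
      (fun ω => g j (H ω)) =ᵐ[μ]
        fun ω => r (fun k => (μ[X k | MeasurableSpace.comap H inferInstance]) ω)) ∧
    (fun ω => g 0 (H ω)) =ᵐ[μ] μ[X 0 | MeasurableSpace.comap H inferInstance] := by
  set S : ℕ → Ω → ℝ := fun k => μ[X k | MeasurableSpace.comap H inferInstance] with hS
  -- Step 1: each X k, k < j, is a measurable function of the noises and confounder values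
  have claimA : ∀ j, j ≤ p → ∃ G : Fin j → ((Fin j → ℝ) × (Fin j → ℝ)) → ℝ,
      (∀ k, Measurable (G k)) ∧
      ∀ ω (k : Fin j), X k ω = G k (fun i => ε i ω, fun i => g i (H ω)) := by
    intro j
    induction j with
    | zero => exact fun _ => ⟨fun k => k.elim0, fun k => k.elim0, fun ω k => k.elim0⟩
    | succ n ih =>
      intro hn
      obtain ⟨G, hGm, hGeq⟩ := ih (Nat.le_of_succ_le hn)
      set ρ : (Fin (n+1) → ℝ) → (Fin n → ℝ) := fun v i => v i.castSucc with hρ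
      have hρm : Measurable ρ :=
        measurable_pi_lambda _ fun i => measurable_pi_apply _
      refine ⟨fun k => Fin.lastCases
        (fun eu => f n (fun i => G i (ρ eu.1, ρ eu.2)) + eu.2 (Fin.last n) + eu.1 (Fin.last n))
        (fun (k : Fin n) eu => G k (ρ eu.1, ρ eu.2)) k, ?_, ?_⟩
      · intro k
        induction k using Fin.lastCases with
        | last =>
          simp only [Fin.lastCases_last]
          refine Measurable.add (Measurable.add ?_ ?_) ?_
          · exact (hf n).comp (measurable_pi_lambda _ fun i =>
              (hGm i).comp ((hρm.comp measurable_fst).prodMk (hρm.comp measurable_snd)))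
          · exact (measurable_pi_apply _).comp measurable_snd
          · exact (measurable_pi_apply _).comp measurable_fst
        | cast k =>
          simp only [Fin.lastCases_castSucc]
          exact (hGm k).comp ((hρm.comp measurable_fst).prodMk (hρm.comp measurable_snd))
      · intro ω k
        induction k using Fin.lastCases with
        | last =>
          simp only [Fin.lastCases_last, Fin.val_last]
          rw [hX n (by omega) ω]
          congr 2
          · congr 1
            funext i
            rw [hGeq ω i]
            congr 1
        | cast k =>
          simp only [Fin.lastCases_castSucc, Fin.coe_castSucc]
          rw [hGeq ω k]
          congr 1
  -- Step 2: key identity S_j = χ_j (g ∘ H) + g_j ∘ H a.e.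
  have key : ∀ j, j < p → ∃ χ : (Fin j → ℝ) → ℝ, Measurable χ ∧
      (S j =ᵐ[μ] fun ω => χ (fun k : Fin j => g k (H ω)) + g j (H ω)) ∧
      ((∀ v, f j v = 0) → ∀ u, χ u = 0) := by
    intro j hj
    obtain ⟨G, hGm, hGeq⟩ := claimA j hj.le
    set V : Ω → (Fin (j+1) → ℝ) := fun ω k => ε k ω with hV
    have hVm : Measurable V := measurable_pi_lambda _ fun k => hεm k
    set ρ : (Fin (j+1) → ℝ) → (Fin j → ℝ) := fun v i => v i.castSucc with hρ
    have hρm : Measurable ρ := measurable_pi_lambda _ fun i => measurable_pi_apply _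
    set ν := μ.map V with hν
    have hPν : IsProbabilityMeasure ν := Measure.isProbabilityMeasure_map hVm.aemeasurable
    have hindep : IndepFun H V μ := by
      have hπ : Measurable (fun (v : Fin p → ℝ) (k : Fin (j+1)) => v (Fin.castLE hj k)) :=
        measurable_pi_lambda _ fun k => measurable_pi_apply _
      exact (hεH.comp hπ measurable_id).symm
    set A : ((Fin j → ℝ) × (Fin (j+1) → ℝ)) → ℝ :=
      fun q => f j (fun k => G k (ρ q.2, q.1)) with hA
    have hAm : Measurable A := (hf j).comp (measurable_pi_lambda _ fun k =>
      (hGm k).comp ((hρm.comp measurable_snd).prodMk measurable_fst))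
    set χ : (Fin j → ℝ) → ℝ := fun w => ∫ e, A (w, e) ∂ν with hχ
    have hχm : Measurable χ :=
      (StronglyMeasurable.integral_prod_right' (hAm.stronglyMeasurable)).measurable
    set Θ : 𝓗 × (Fin (j+1) → ℝ) → ℝ := fun q => A (fun k => g k q.1, q.2) + g j q.1 with hΘ
    have hΘm : Measurable Θ := by
      apply Measurable.add
      · apply hAm.comp
        apply Measurable.prodMk
        · exact measurable_pi_lambda _ fun k => (hg _).comp measurable_fst
        · exact measurable_snd
      · exact (hg j).comp measurable_fst
    set Φ : 𝓗 × (Fin (j+1) → ℝ) → ℝ := fun q => Θ q + q.2 (Fin.last j) with hΦ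
    have hΦm : Measurable Φ := hΘm.add ((measurable_pi_apply _).comp measurable_snd)
    have hΦX : ∀ ω, Φ (H ω, V ω) = X j ω := by
      intro ω
      rw [hX j hj ω]
      have harg : (fun k : Fin j => X k ω) = fun k => G k (ρ (V ω), fun i => g i (H ω)) :=
        funext fun k => hGeq ω k
      show A (fun k => g k (H ω), V ω) + g j (H ω) + V ω (Fin.last j) = _
      have : A (fun k => g k (H ω), V ω) = f j (fun k : Fin j => X k ω) := by
        rw [harg]
      rw [this]
      rfl
    have hΦint : Integrable (fun ω => Φ (H ω, V ω)) μ :=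
      (hXint j hj).congr (Filter.Eventually.of_forall fun ω => (hΦX ω).symm)
    have hfr := freezing_aux μ hH hVm hindep hΦm hΦint
    have hΘX : ∀ ω, Θ (H ω, V ω) = X j ω - ε j ω := by
      intro ω
      have h := hΦX ω
      have hlast : V ω (Fin.last j) = ε j ω := rfl
      simp only [hΦ] at h
      rw [hlast] at h
      linarith
    have hΘint : Integrable (fun ω => Θ (H ω, V ω)) μ :=
      ((hXint j hj).sub (hεint j)).congr (Filter.Eventually.of_forall fun ω => (hΘX ω).symm)
    have hmap : μ.map (fun ω => (H ω, V ω)) = (μ.map H).prod ν :=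
      (indepFun_iff_map_prod_eq_prod_map_map hH.aemeasurable hVm.aemeasurable).mp hindep
    have hΘprod : Integrable Θ ((μ.map H).prod ν) := by
      rw [← hmap]
      exact (integrable_map_measure hΘm.aestronglyMeasurable
        (hH.prodMk hVm).aemeasurable).mpr hΘint
    have hslice : ∀ᵐ ω ∂μ, Integrable (fun e => Θ (H ω, e)) ν :=
      ae_of_ae_map hH.aemeasurable hΘprod.prod_right_ae
    have hlastint : Integrable (fun e : Fin (j+1) → ℝ => e (Fin.last j)) ν := by
      rw [hν]
      exact (integrable_map_measure
        (measurable_pi_apply (Fin.last j)).aestronglyMeasurable hVm.aemeasurable).mpr (hεint j)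
    have hlastzero : ∫ e, e (Fin.last j) ∂ν = 0 := by
      rw [hν, integral_map hVm.aemeasurable (measurable_pi_apply (Fin.last j)).aestronglyMeasurable]
      exact hεmean j
    refine ⟨χ, hχm, ?_, ?_⟩
    · have hfun : (fun ω => Φ (H ω, V ω)) = X j := funext hΦX
      have hfr' : S j =ᵐ[μ] fun ω => ∫ y, Φ (H ω, y) ∂ν := by
        show μ[X j | MeasurableSpace.comap H inferInstance] =ᵐ[μ] _
        rw [← hfun]
        exact hfr
      refine hfr'.trans ?_
      filter_upwards [hslice] with ω h2
      have split1 : ∫ e, Φ (H ω, e) ∂ν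
          = (∫ e, Θ (H ω, e) ∂ν) + ∫ e, e (Fin.last j) ∂ν := by
        simp only [hΦ]
        exact integral_add h2 hlastint
      have hconstint : Integrable (fun _ : Fin (j+1) → ℝ => g j (H ω)) ν := integrable_const _
      have hAint : Integrable (fun e => A (fun k : Fin j => g k (H ω), e)) ν := by
        refine (h2.sub hconstint).congr (Filter.Eventually.of_forall fun e => ?_)
        simp [hΘ]
      have split2 : ∫ e, Θ (H ω, e) ∂ν
          = (∫ e, A (fun k : Fin j => g k (H ω), e) ∂ν) + g j (H ω) := by
        simp only [hΘ]
        rw [integral_add hAint hconstint, integral_const, probReal_univ,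
          one_smul]
      rw [split1, split2, hlastzero]
      ring
    · intro h0 u
      simp only [hχ, hA, h0]
      simp
  -- Step 3: strong induction to recover g_j from the proxies
  have part1 : ∀ j, j < p → ∃ r : (Fin (j + 1) → ℝ) → ℝ, Measurable r ∧
      ((fun ω => g j (H ω)) =ᵐ[μ] fun ω => r (fun k => S k ω)) := by
    intro j
    induction j using Nat.strong_induction_on with
    | _ j ih =>
      intro hj
      obtain ⟨χ, hχm, hχeq, -⟩ := key j hj
      choose r hrm hre using fun k : Fin j => ih k k.isLt (k.isLt.trans hj)
      refine ⟨fun s => s (Fin.last j) -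
        χ (fun k => r k (fun i => s ⟨i.val, by omega⟩)), ?_, ?_⟩
      · refine Measurable.sub (measurable_pi_apply _)
          (hχm.comp (measurable_pi_lambda _ fun k => (hrm k).comp
            (measurable_pi_lambda _ fun i => measurable_pi_apply _)))
      · have hall : ∀ᵐ ω ∂μ, ∀ k : Fin j, g k (H ω) = r k (fun i => S i ω) :=
          ae_all_iff.mpr fun k => hre k
        filter_upwards [hχeq, hall] with ω h1 h2
        show g j (H ω) = S (Fin.last j).val ω -
          χ (fun k => r k (fun i => S (⟨i.val, by omega⟩ : Fin (j+1)).val ω))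
        have harg : (fun k : Fin j => r k
            (fun i => S (⟨i.val, by omega⟩ : Fin (j+1)).val ω))
            = fun k : Fin j => g k (H ω) := by
          funext k
          exact (h2 k).symm
        rw [harg]
        have h1' : S j ω = χ (fun k : Fin j => g k (H ω)) + g j (H ω) := h1
        have : S (Fin.last j).val ω = S j ω := by simp [Fin.val_last]
        rw [this, h1']
        ring
  refine ⟨part1, ?_⟩
  obtain ⟨χ, hχm, hχeq, hχ0⟩ := key 0 hp
  have hz : ∀ u, χ u = 0 := hχ0 hf0
  refine (hχeq.trans ?_).symm
  filter_upwards with ω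
  rw [hz]
  ring
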